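/- Let n ≥ 1 and let K = ℚ(X_0,…,X_{n−1},Y_1,…,Y_n) be the rational function field in the 2n indicated variables. For every subset J ⊆ {1,…,n−1}: W_{n,J}(X_0^{−1},…,X_{n−1}^{−1}, Y_1^{−1},…,Y_n^{−1}) = (−1)^{|J|+1} · Σ_{S⊆J} W_{n,S}(X,Y). -/

import Mathlib

/-- The rational expression `W_{n,I}(X,Y)` over a field, with `Z̲ := Z/(1-Z)`. -/
noncomputable def Wrat {K : Type*} [Field K] (n : ℕ) (I : Finset ℕ) (X Y : ℕ → K) : K :=
  (X 0 / (1 - X 0)) * ∏ i ∈ I, X i / (1 - X i)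
  + (Y n / (1 - Y n)) * ∏ i ∈ I, Y i / (1 - Y i)
  + ∑ j ∈ I, (∏ i ∈ I.filter (· ≤ j), Y i / (1 - Y i)) *
      ∏ i ∈ I.filter (fun i => j ≤ i), X i / (1 - X i)
  + ∑ j ∈ insert n I, (∏ i ∈ I.filter (· < j), Y i / (1 - Y i)) *
      ∏ i ∈ I.filter (fun i => j ≤ i), X i / (1 - X i)

/-- The rational function field ℚ(X_0,…,X_{n−1},Y_1,…,Y_n) in 2n variables. -/
abbrev KXY (n : ℕ) := FractionRing (MvPolynomial (Fin n ⊕ Fin n) ℚ)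

/-- The variable X_i (0 ≤ i ≤ n−1) of ℚ(X_0,…,X_{n−1},Y_1,…,Y_n); junk value 1 outside range. -/
noncomputable def Xvar (n : ℕ) (i : ℕ) : KXY n :=
  if h : i < n then algebraMap (MvPolynomial (Fin n ⊕ Fin n) ℚ) (KXY n)
    (MvPolynomial.X (Sum.inl ⟨i, h⟩)) else 1

/-- The variable Y_i (1 ≤ i ≤ n) of ℚ(X_0,…,X_{n−1},Y_1,…,Y_n); junk value 1 outside range. -/
noncomputable def Yvar (n : ℕ) (i : ℕ) : KXY n :=
  if h : 1 ≤ i ∧ i ≤ n then algebraMap (MvPolynomial (Fin n ⊕ Fin n) ℚ) (KXY n)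
    (MvPolynomial.X (Sum.inr ⟨i - 1, by omega⟩)) else 1

/-- Abstract form of `Wrat` with `f i` in place of `X i / (1 - X i)`. -/
noncomputable def Wgen {K : Type*} [CommRing K] (n : ℕ) (I : Finset ℕ) (f g : ℕ → K) : K :=
  f 0 * ∏ i ∈ I, f i
  + g n * ∏ i ∈ I, g i
  + ∑ j ∈ I, (∏ i ∈ I.filter (· ≤ j), g i) * ∏ i ∈ I.filter (fun i => j ≤ i), f i
  + ∑ j ∈ insert n I, (∏ i ∈ I.filter (· < j), g i) * ∏ i ∈ I.filter (fun i => j ≤ i), f i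

lemma Wgen_insert {K : Type*} [CommRing K] (n m : ℕ) (S : Finset ℕ) (f g : ℕ → K)
    (hmn : m < n) (hlt : ∀ i ∈ S, i < m) :
    Wgen n (insert m S) f g
      = f m * Wgen n S f g
        + (∏ i ∈ S, g i) * (g m * (1 + g n) + f m * (g m - g n)) := by
  have hmS : m ∉ S := fun h => lt_irrefl m (hlt m h)
  have hnS : n ∉ S := fun h => absurd (hlt n h) (by omega)
  have hnI : n ∉ insert m S := by
    simp only [Finset.mem_insert]
    push_neg
    exact ⟨by omega, fun h => absurd (hlt n h) (by omega)⟩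
  have e1 : (insert m S).filter (· ≤ m) = insert m S :=
    Finset.filter_true_of_mem (by
      intro i hi
      rcases Finset.mem_insert.mp hi with rfl | hi
      · exact le_rfl
      · exact (hlt i hi).le)
  have e2 : (insert m S).filter (fun i => m ≤ i) = {m} := by
    rw [Finset.filter_insert, if_pos le_rfl,
      Finset.filter_false_of_mem (fun i hi => by have := hlt i hi; omega)]
    rfl
  have e3 : ∀ j ∈ S, (insert m S).filter (· ≤ j) = S.filter (· ≤ j) := by
    intro j hj
    rw [Finset.filter_insert, if_neg (by have := hlt j hj; omega)]
  have e4 : ∀ j ∈ S, (insert m S).filter (fun i => j ≤ i)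
      = insert m (S.filter (fun i => j ≤ i)) := by
    intro j hj
    rw [Finset.filter_insert, if_pos (hlt j hj).le]
  have e5 : (insert m S).filter (· < n) = insert m S :=
    Finset.filter_true_of_mem (by
      intro i hi
      rcases Finset.mem_insert.mp hi with rfl | hi
      · exact hmn
      · exact lt_trans (hlt i hi) hmn)
  have e6 : (insert m S).filter (fun i => n ≤ i) = ∅ :=
    Finset.filter_false_of_mem (by
      intro i hi
      rcases Finset.mem_insert.mp hi with rfl | hi
      · omega
      · have := hlt i hi; omega)
  have e7 : (insert m S).filter (· < m) = S := by
    rw [Finset.filter_insert, if_neg (lt_irrefl m), Finset.filter_true_of_mem hlt]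
  have e8 : ∀ j ∈ S, (insert m S).filter (· < j) = S.filter (· < j) := by
    intro j hj
    rw [Finset.filter_insert, if_neg (by have := hlt j hj; omega)]
  have e9 : S.filter (· < n) = S :=
    Finset.filter_true_of_mem (fun i hi => lt_trans (hlt i hi) hmn)
  have e10 : S.filter (fun i => n ≤ i) = ∅ :=
    Finset.filter_false_of_mem (fun i hi => by have := hlt i hi; omega)
  have t3 : (∑ j ∈ S, (∏ i ∈ (insert m S).filter (· ≤ j), g i) *
        ∏ i ∈ (insert m S).filter (fun i => j ≤ i), f i)
      = f m * ∑ j ∈ S, (∏ i ∈ S.filter (· ≤ j), g i) *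
          ∏ i ∈ S.filter (fun i => j ≤ i), f i := by
    rw [Finset.mul_sum]
    refine Finset.sum_congr rfl fun j hj => ?_
    rw [e3 j hj, e4 j hj,
      Finset.prod_insert (fun h => hmS (Finset.mem_filter.mp h).1)]
    ring
  have t4 : (∑ j ∈ S, (∏ i ∈ (insert m S).filter (· < j), g i) *
        ∏ i ∈ (insert m S).filter (fun i => j ≤ i), f i)
      = f m * ∑ j ∈ S, (∏ i ∈ S.filter (· < j), g i) *
          ∏ i ∈ S.filter (fun i => j ≤ i), f i := by
    rw [Finset.mul_sum]
    refine Finset.sum_congr rfl fun j hj => ?_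
    rw [e8 j hj, e4 j hj,
      Finset.prod_insert (fun h => hmS (Finset.mem_filter.mp h).1)]
    ring
  unfold Wgen
  rw [Finset.sum_insert hnI, Finset.sum_insert hmS, Finset.sum_insert hmS,
    Finset.sum_insert hnS, Finset.prod_insert hmS, Finset.prod_insert hmS,
    e1, e2, e5, e6, e7, e9, e10, t3, t4, Finset.prod_singleton,
    Finset.prod_empty, Finset.prod_insert hmS]
  ring

lemma Wgen_inv {K : Type*} [CommRing K] (n : ℕ) (hn : 1 ≤ n) (f g f' g' : ℕ → K)
    (h0 : f' 0 = -(1 + f 0)) (hgn : g' n = -(1 + g n)) :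
    ∀ J : Finset ℕ, J ⊆ Finset.Icc 1 (n - 1) →
      (∀ i ∈ J, f' i = -(1 + f i)) → (∀ i ∈ J, g' i = -(1 + g i)) →
      Wgen n J f' g' = (-1) ^ (J.card + 1) * ∑ S ∈ J.powerset, Wgen n S f g := by
  intro J
  induction J using Finset.strongInduction with
  | _ J ih =>
    intro hJ hf hg
    rcases J.eq_empty_or_nonempty with rfl | hne
    · simp only [Wgen, Finset.prod_empty, Finset.sum_empty, Finset.filter_empty,
        Finset.insert_empty, Finset.sum_singleton, Finset.powerset_empty,
        Finset.card_empty, mul_one, h0, hgn]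
      ring
    · have hmJ : J.max' hne ∈ J := J.max'_mem hne
      set m := J.max' hne with hm
      set J' := J.erase m with hJ'def
      have hins : insert m J' = J := Finset.insert_erase hmJ
      have hmJ' : m ∉ J' := Finset.notMem_erase _ _
      have hlt : ∀ i ∈ J', i < m := fun i hi =>
        lt_of_le_of_ne (J.le_max' i (Finset.mem_of_mem_erase hi)) (Finset.ne_of_mem_erase hi)
      have hmn : m < n := by
        have := hJ hmJ
        rw [Finset.mem_Icc] at this
        omega
      have IH := ih J' (Finset.erase_ssubset hmJ)
        (fun i hi => hJ (Finset.mem_of_mem_erase hi))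
        (fun i hi => hf i (Finset.mem_of_mem_erase hi))
        (fun i hi => hg i (Finset.mem_of_mem_erase hi))
      have hprod : (∏ i ∈ J', g' i)
          = (-1) ^ J'.card * ∑ S ∈ J'.powerset, ∏ i ∈ S, g i := by
        calc ∏ i ∈ J', g' i = ∏ i ∈ J', (-1) * (g i + 1) := by
              refine Finset.prod_congr rfl fun i hi => ?_
              rw [hg i (Finset.mem_of_mem_erase hi)]; ring
          _ = (-1) ^ J'.card * ∏ i ∈ J', (g i + 1) := by
              rw [Finset.prod_mul_distrib, Finset.prod_const]
          _ = (-1) ^ J'.card * ∑ S ∈ J'.powerset, ∏ i ∈ S, g i := by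
              rw [Finset.prod_add]
              simp
      rw [← hins, Wgen_insert n m J' f' g' hmn hlt, IH, hprod,
        Finset.card_insert_of_notMem hmJ', Finset.sum_powerset_insert hmJ',
        Finset.sum_congr rfl (fun S hS => Wgen_insert n m S f g hmn
          (fun i hi => hlt i (Finset.mem_powerset.mp hS hi))),
        Finset.sum_add_distrib, ← Finset.mul_sum, ← Finset.sum_mul,
        hf m hmJ, hg m hmJ, hgn]
      ring

lemma Wrat_eq_Wgen {K : Type*} [Field K] (n : ℕ) (I : Finset ℕ) (X Y : ℕ → K) :
    Wrat n I X Y = Wgen n I (fun i => X i / (1 - X i)) (fun i => Y i / (1 - Y i)) := rfl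

lemma inv_frac_eq {K : Type*} [Field K] (a : K) (h0 : a ≠ 0) (h1 : a ≠ 1) :
    a⁻¹ / (1 - a⁻¹) = -(1 + a / (1 - a)) := by
  have h1a : 1 - a ≠ 0 := sub_ne_zero.mpr (fun h => h1 h.symm)
  have h2 : 1 - a⁻¹ ≠ 0 := by
    rw [sub_ne_zero]
    intro h
    exact h1 (inv_eq_one.mp h.symm)
  have h4 : -1 + a ≠ 0 := fun h => h1a (by linear_combination -h)
  field_simp
  ring

lemma X_ne_one_poly {n : ℕ} (s : Fin n ⊕ Fin n) :
    (MvPolynomial.X s : MvPolynomial (Fin n ⊕ Fin n) ℚ) ≠ 1 := by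
  intro h
  have := congrArg MvPolynomial.constantCoeff h
  simp at this

lemma algX_ne_zero {n : ℕ} (s : Fin n ⊕ Fin n) :
    algebraMap (MvPolynomial (Fin n ⊕ Fin n) ℚ) (KXY n) (MvPolynomial.X s) ≠ 0 := by
  rw [map_ne_zero_iff _ (IsFractionRing.injective _ _)]
  exact MvPolynomial.X_ne_zero s

lemma algX_ne_one {n : ℕ} (s : Fin n ⊕ Fin n) :
    algebraMap (MvPolynomial (Fin n ⊕ Fin n) ℚ) (KXY n) (MvPolynomial.X s) ≠ 1 := by
  intro h
  rw [show (1 : KXY n) = algebraMap (MvPolynomial (Fin n ⊕ Fin n) ℚ) (KXY n) 1 from (map_one _).symm]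
    at h
  exact X_ne_one_poly s (IsFractionRing.injective _ _ h)

theorem W_inversion_lemma (n : ℕ) (hn : 1 ≤ n) (J : Finset ℕ)
    (hJ : J ⊆ Finset.Icc 1 (n - 1)) :
    Wrat n J (fun i => (Xvar n i)⁻¹) (fun i => (Yvar n i)⁻¹) =
      (-1) ^ (J.card + 1) * ∑ S ∈ J.powerset, Wrat n S (Xvar n) (Yvar n) := by
  have hXi : ∀ i, i < n → (Xvar n i)⁻¹ / (1 - (Xvar n i)⁻¹)
      = -(1 + Xvar n i / (1 - Xvar n i)) := by
    intro i hi
    have : Xvar n i = algebraMap (MvPolynomial (Fin n ⊕ Fin n) ℚ) (KXY n)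
        (MvPolynomial.X (Sum.inl ⟨i, hi⟩)) := by rw [Xvar, dif_pos hi]
    rw [this]
    exact inv_frac_eq _ (algX_ne_zero _) (algX_ne_one _)
  have hYi : ∀ i, 1 ≤ i → i ≤ n → (Yvar n i)⁻¹ / (1 - (Yvar n i)⁻¹)
      = -(1 + Yvar n i / (1 - Yvar n i)) := by
    intro i h1 h2
    have : Yvar n i = algebraMap (MvPolynomial (Fin n ⊕ Fin n) ℚ) (KXY n)
        (MvPolynomial.X (Sum.inr ⟨i - 1, by omega⟩)) := by rw [Yvar, dif_pos ⟨h1, h2⟩]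
    rw [this]
    exact inv_frac_eq _ (algX_ne_zero _) (algX_ne_one _)
  have := Wgen_inv n hn (fun i => Xvar n i / (1 - Xvar n i))
    (fun i => Yvar n i / (1 - Yvar n i))
    (fun i => (Xvar n i)⁻¹ / (1 - (Xvar n i)⁻¹))
    (fun i => (Yvar n i)⁻¹ / (1 - (Yvar n i)⁻¹))
    (hXi 0 hn) (hYi n hn le_rfl) J hJ
    (fun i hi => by
      have := hJ hi; rw [Finset.mem_Icc] at this
      exact hXi i (by omega))
    (fun i hi => by
      have := hJ hi; rw [Finset.mem_Icc] at this
      exact hYi i (by omega) (by omega))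
  rw [Wrat_eq_Wgen, this]
  simp only [Wrat_eq_Wgen]
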